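/- The power series G(t) = Σ_{d=0}^∞ ((3d)!)^2 / (d!)^6 · t^{3d} satisfies the differential equation L G = 0, where L = D^4 − 729 t^3 (D+1)^2 (D+2)^2 and D = t · d/dt, as an identity of formal power series. -/

import Mathlib

open scoped Nat
open PowerSeries

/-- The operator `D = t d/dt` on formal power series. -/
noncomputable def Dop : ℚ⟦X⟧ → ℚ⟦X⟧ := fun f => PowerSeries.mk fun n => (n : ℚ) * coeff n f

/-- `G(t) = Σ_d ((3d)!)²/(d!)⁶ t^{3d}`, the regularized quantum period of the cubic 4-fold. -/
noncomputable def cubicPeriod : ℚ⟦X⟧ :=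
  PowerSeries.mk fun n => if 3 ∣ n then ((n ! : ℚ)) ^ 2 / (((n / 3)! : ℚ)) ^ 6 else 0

lemma key (e : ℕ) :
    ((3*e+3 : ℕ) : ℚ)^4 * (((3*e+3)! : ℚ)^2 / (((e+1))! : ℚ)^6)
      = 729 * ((3*e+1 : ℕ) : ℚ)^2 * ((3*e+2 : ℕ) : ℚ)^2 * (((3*e)! : ℚ)^2 / ((e)! : ℚ)^6) := by
  have h1 : ((3*e+3)! : ℚ) = (3*e+3) * ((3*e+2) * ((3*e+1) * ((3*e)! : ℚ))) := by
    push_cast [show 3*e+3 = (3*e+2)+1 by ring, Nat.factorial_succ,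
      show 3*e+2 = (3*e+1)+1 by ring, show (3*e+1) = (3*e)+1 from rfl]
    ring
  have h2 : (((e+1))! : ℚ) = (e+1) * ((e)! : ℚ) := by
    push_cast [Nat.factorial_succ]; ring
  have he : ((e)! : ℚ) ≠ 0 := Nat.cast_ne_zero.2 (Nat.factorial_ne_zero e)
  have he1 : ((e:ℚ)+1) ≠ 0 := by positivity
  rw [h1, h2]
  field_simp
  push_cast
  ring

theorem cubic_period_satisfies_QDE :
    Dop (Dop (Dop (Dop cubicPeriod)))
      - 729 * X ^ 3 *
        ((fun f => Dop f + f) ((fun f => Dop f + f)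
          ((fun f => Dop f + 2 • f) ((fun f => Dop f + 2 • f) cubicPeriod)))) = 0 := by
  have h729 : (729 : ℚ⟦X⟧) = C 729 := (map_ofNat C 729).symm
  ext n
  rw [map_sub, map_zero, h729, mul_assoc, coeff_C_mul, coeff_X_pow_mul']
  simp only [Dop, cubicPeriod, two_smul, map_add, coeff_mk]
  rcases lt_or_ge n 3 with hn | hn
  · rw [if_neg (not_le.2 hn)]
    interval_cases n <;> norm_num
  · rw [if_pos hn]
    by_cases h3 : 3 ∣ n
    · obtain ⟨d, rfl⟩ := h3
      obtain ⟨e, rfl⟩ : ∃ e, d = e + 1 := ⟨d - 1, by omega⟩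
      have h1 : 3 * (e+1) - 3 = 3 * e := by omega
      have h4 : 3 * (e+1) / 3 = e + 1 := by omega
      have h5 : 3 * e / 3 = e := by omega
      rw [h1, if_pos (dvd_mul_right 3 (e+1)), if_pos (dvd_mul_right 3 e), h4, h5]
      rw [show 3*(e+1) = 3*e+3 from by ring]
      have hk := key e
      push_cast at hk ⊢
      linear_combination hk
    · have h3' : ¬ (3 ∣ n - 3) := by omega
      rw [if_neg h3, if_neg h3']
      ring
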